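/- arXiv:1707.03901 — 3 statements merged into one kernel-verified Lean document; each statement's English description precedes it below -/
import Mathlib

section
/- If A, B in SL₂(ℝ) satisfy tr(ABA⁻¹B⁻¹) = −2, then setting X = tr A, Y = tr B, Z = tr(AB), the triple (X,Y,Z) satisfies X² + Y² + Z² = XYZ. -/
theorem punctured_torus_markov_surface (A B : Matrix.SpecialLinearGroup (Fin 2) ℝ)
    (h : Matrix.trace ((A * B * A⁻¹ * B⁻¹ : Matrix.SpecialLinearGroup (Fin 2) ℝ) : Matrix (Fin 2) (Fin 2) ℝ) = -2) :
    (Matrix.trace (A : Matrix (Fin 2) (Fin 2) ℝ))^2 +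
    (Matrix.trace (B : Matrix (Fin 2) (Fin 2) ℝ))^2 +
    (Matrix.trace ((A * B : Matrix.SpecialLinearGroup (Fin 2) ℝ) : Matrix (Fin 2) (Fin 2) ℝ))^2 =
      Matrix.trace (A : Matrix (Fin 2) (Fin 2) ℝ) *
      Matrix.trace (B : Matrix (Fin 2) (Fin 2) ℝ) *
      Matrix.trace ((A * B : Matrix.SpecialLinearGroup (Fin 2) ℝ) : Matrix (Fin 2) (Fin 2) ℝ) := by
  have hA : Matrix.det (A : Matrix (Fin 2) (Fin 2) ℝ) = 1 := A.2
  have hB : Matrix.det (B : Matrix (Fin 2) (Fin 2) ℝ) = 1 := B.2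
  rw [Matrix.det_fin_two] at hA hB
  simp only [Matrix.SpecialLinearGroup.coe_mul, Matrix.SpecialLinearGroup.coe_inv,
    Matrix.trace_fin_two, Matrix.mul_apply, Fin.sum_univ_two, Matrix.adjugate_fin_two,
    Matrix.cons_val', Matrix.cons_val_zero, Matrix.cons_val_one, Matrix.head_cons,
    Matrix.empty_val', Matrix.cons_val_fin_one, Matrix.head_fin_const, Matrix.of_apply] at h ⊢
  linear_combination h + (2 - (B 0 0 + B 1 1)^2) * hA +
    (-(A 0 0)^2 - (A 1 1)^2 - 2 * A 0 1 * A 1 0) * hB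
end

section
/- For every natural number a ≥ 1, the matrices A_a = [[1−a+a², a²],[a, a+1]] and B_a = [[1−2a+4a², 4a²],[2a, 2a+1]] lie in SL₂(ℤ) and the trace of the commutator A_a B_a A_a⁻¹ B_a⁻¹ equals 2 − 4a⁶. -/
theorem generalized_matrices_commutator (a : ℕ) (ha : 1 ≤ a) :
    ((!![1 - (a:ℤ) + a^2, a^2; a, a + 1]) : Matrix (Fin 2) (Fin 2) ℤ).det = 1 ∧
    ((!![1 - 2*(a:ℤ) + 4*a^2, 4*a^2; 2*a, 2*a + 1]) : Matrix (Fin 2) (Fin 2) ℤ).det = 1 ∧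
    Matrix.trace
      (((!![1 - (a:ℤ) + a^2, a^2; a, a + 1]) : Matrix (Fin 2) (Fin 2) ℤ) *
       ((!![1 - 2*(a:ℤ) + 4*a^2, 4*a^2; 2*a, 2*a + 1]) : Matrix (Fin 2) (Fin 2) ℤ) *
       ((!![1 - (a:ℤ) + a^2, a^2; a, a + 1]) : Matrix (Fin 2) (Fin 2) ℤ)⁻¹ *
       ((!![1 - 2*(a:ℤ) + 4*a^2, 4*a^2; 2*a, 2*a + 1]) : Matrix (Fin 2) (Fin 2) ℤ)⁻¹)
      = 2 - 4*(a:ℤ)^6 := by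
  have hA : ((!![1 - (a:ℤ) + a^2, a^2; a, a + 1]) : Matrix (Fin 2) (Fin 2) ℤ).det = 1 := by
    simp [Matrix.det_fin_two_of]; ring
  have hB : ((!![1 - 2*(a:ℤ) + 4*a^2, 4*a^2; 2*a, 2*a + 1]) : Matrix (Fin 2) (Fin 2) ℤ).det = 1 := by
    simp [Matrix.det_fin_two_of]; ring
  refine ⟨hA, hB, ?_⟩
  rw [Matrix.inv_def, Matrix.inv_def, hA, hB]
  simp [Matrix.adjugate_fin_two_of, Matrix.trace_fin_two, Matrix.mul_apply,
    Fin.sum_univ_succ]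
  ring
end

section
/- Let ‖·‖ be a norm on ℝ² and ψ(x) = ‖(x,1)‖. If ‖·‖ is differentiable (as a function ℝ²\{0} → ℝ) at the point (x₀, 1), then ψ is differentiable at x₀; conversely, if ψ is differentiable at x₀ then ‖·‖ is differentiable at (x₀, 1). -/
theorem fock_differentiable_iff (N : ℝ × ℝ → ℝ)
    (hzero : ∀ v, N v = 0 ↔ v = 0)
    (hhom : ∀ (c : ℝ) (v), N (c • v) = |c| * N v)
    (htri : ∀ v w, N (v + w) ≤ N v + N w)
    (x₀ : ℝ) :
    DifferentiableAt ℝ N (x₀, 1) ↔ DifferentiableAt ℝ (fun x : ℝ => N (x, 1)) x₀ := by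
  constructor
  · intro h
    exact h.comp x₀ (differentiableAt_id.prodMk (differentiableAt_const 1))
  · intro h
    have hopen : IsOpen {p : ℝ × ℝ | 0 < p.2} := isOpen_lt continuous_const continuous_snd
    have key : (fun p : ℝ × ℝ => p.2 * N (p.1 / p.2, 1)) =ᶠ[nhds (x₀, 1)] N := by
      filter_upwards [hopen.mem_nhds (by norm_num : ((x₀, (1:ℝ)) : ℝ × ℝ) ∈ {p : ℝ × ℝ | 0 < p.2})] with p hp
      have hne : p.2 ≠ 0 := ne_of_gt hp
      have hps : p.2 • ((p.1 / p.2 : ℝ), (1 : ℝ)) = p := by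
        have h1 : p.2 * (p.1 / p.2) = p.1 := by field_simp
        have h2 : p.2 • ((p.1 / p.2 : ℝ), (1 : ℝ)) = (p.2 * (p.1 / p.2), p.2 * 1) := rfl
        rw [h2, h1, mul_one]
      calc p.2 * N (p.1 / p.2, 1) = |p.2| * N (p.1 / p.2, 1) := by rw [abs_of_pos hp]
        _ = N (p.2 • ((p.1 / p.2 : ℝ), (1:ℝ))) := (hhom _ _).symm
        _ = N p := by rw [hps]
    refine (Filter.EventuallyEq.differentiableAt_iff key).mp ?_
    have hdiv : DifferentiableAt ℝ (fun p : ℝ × ℝ => p.1 / p.2) (x₀, 1) := by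
      have h1 : DifferentiableAt ℝ (fun p : ℝ × ℝ => p.1) (x₀, 1) := differentiableAt_fst
      have h2 : DifferentiableAt ℝ (fun p : ℝ × ℝ => (p.2)⁻¹) (x₀, 1) := by
        apply DifferentiableAt.inv differentiableAt_snd
        norm_num
      simp only [div_eq_mul_inv]
      exact h1.mul h2
    have h' : DifferentiableAt ℝ (fun x : ℝ => N (x, 1)) (((x₀, 1) : ℝ × ℝ).1 / ((x₀, 1) : ℝ × ℝ).2) := by
      simpa using h
    have hcomp : DifferentiableAt ℝ ((fun x : ℝ => N (x, 1)) ∘ (fun p : ℝ × ℝ => p.1 / p.2)) (x₀, 1) :=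
      h'.comp (x₀, 1) hdiv
    exact differentiableAt_snd.mul hcomp
end
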